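/- Estimate (12) (from the proof of Theorem 1): Let 1 < p ≤ 2 and let f ∈ L^p_A(ℝ₊) on the Jacobi hypergroup, and let g(t) = t^{2(α+1)} for t > k and g(t) = t³ for 0 ≤ t ≤ k, where k is the constant from the c-function estimates. Then there exists a positive constant c such that for every δ > 0, δ^{2p} ∫₀^{1/δ} t^{2p} |𝓕(f)(t)|^p (g(t))^{p−2} dt/|c(t)|² ≤ c (ω_{A,p}(f)(δ))^p. -/

import Mathlib

open MeasureTheory Set Filter

/-- The `L^p` norm on `(0,∞)` with respect to the weighted measure `w(x) dx`. -/
noncomputable def wLpNorm (w : ℝ → ℝ) (p : ℝ) (f : ℝ → ℂ) : ℝ :=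
  (∫ x in Set.Ioi (0 : ℝ), ‖f x‖ ^ p * w x) ^ (1 / p)

/-- Membership in `L^p((0,∞), w(x) dx)`. -/
def MemW (w : ℝ → ℝ) (p : ℝ) (f : ℝ → ℂ) : Prop :=
  AEMeasurable f (volume.restrict (Set.Ioi (0 : ℝ))) ∧
    IntegrableOn (fun x => ‖f x‖ ^ p * w x) (Set.Ioi (0 : ℝ))

/-- The Jacobi hypergroup setting: the Chébli–Trimèche hypergroup `(ℝ₊, ∗(A))` with
`A(x) = 2^(2ρ) (sinh x)^(2α+1) (cosh x)^(2β+1)`, `α ≥ β ≥ -1/2`, `α ≠ -1/2`,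
`ρ = α + β + 1`.  Its characters are the Jacobi functions `φ_λ`, satisfying
`|1 - φ_λ(t)| ≥ c₀ min{1, (λt)²}`.  The density `cden = |c(λ)|⁻²` is even, continuous
and comparable to `|λ|^(2α+1)` for `|λ| > k` and to `|λ|²` for `|λ| ≤ k`.  The
generalized Fourier transform `FT` is given on `L¹_A` by
`𝓕(f)(λ) = ∫₀^∞ f(x) φ_λ(x) A(x) dx`; it satisfies `‖𝓕 f‖_∞ ≤ ‖f‖_{A,1}`, the
Hausdorff–Young inequality, the Hardy–Littlewood inequality of Lemma 1 and the
translation identity `𝓕(τ_δ f)(λ) = φ_λ(δ) 𝓕(f)(λ)`, where the generalized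
translations `τ_δ` are `L^p_A`-contractions. -/
structure JacobiHypergroup where
  α : ℝ
  β : ℝ
  ρ : ℝ
  hβα : β ≤ α
  hβ : -(1/2) ≤ β
  hα : α ≠ -(1/2)
  hρ : ρ = α + β + 1
  /-- the weight function `A` of the Jacobi hypergroup -/
  A : ℝ → ℝ
  hA : ∀ x : ℝ, 0 ≤ x →
    A x = (2 : ℝ) ^ (2 * ρ) * Real.sinh x ^ (2 * α + 1) * Real.cosh x ^ (2 * β + 1)
  /-- the Jacobi functions `φ_λ`, the characters of the hypergroup -/
  φ : ℝ → ℝ → ℂ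
  c₀ : ℝ
  hc₀ : 0 < c₀
  hφ_lower : ∀ lam t : ℝ, 0 < t →
    c₀ * min 1 ((lam * t) ^ 2) ≤ ‖1 - φ lam t‖
  /-- the density `|c(λ)|⁻²` of the Plancherel measure -/
  cden : ℝ → ℝ
  hcden_cont : Continuous cden
  hcden_even : ∀ x : ℝ, cden (-x) = cden x
  k : ℝ
  k₁ : ℝ
  k₂ : ℝ
  hk : 0 < k
  hk₁ : 0 < k₁
  hk₂ : 0 < k₂
  hcden_hi : ∀ x : ℝ, k < |x| →
    k₁ * |x| ^ (2 * α + 1) ≤ cden x ∧ cden x ≤ k₂ * |x| ^ (2 * α + 1)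
  hcden_lo : ∀ x : ℝ, |x| ≤ k →
    k₁ * |x| ^ (2 : ℝ) ≤ cden x ∧ cden x ≤ k₂ * |x| ^ (2 : ℝ)
  /-- the generalized Fourier transform -/
  FT : (ℝ → ℂ) → ℝ → ℂ
  hFT_def : ∀ f : ℝ → ℂ, MemW A 1 f → ∀ lam : ℝ,
    FT f lam = ∫ x in Set.Ioi (0 : ℝ), f x * φ lam x * (A x : ℂ)
  hFT_meas : ∀ f : ℝ → ℂ, Measurable (FT f)
  hFT_sub : ∀ f g : ℝ → ℂ, ∀ lam : ℝ,
    FT (fun y => f y - g y) lam = FT f lam - FT g lam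
  /-- `‖𝓕 f‖_∞ ≤ ‖f‖_{A,1}` -/
  hFT_sup : ∀ f : ℝ → ℂ, MemW A 1 f → ∀ lam : ℝ,
    ‖FT f lam‖ ≤ wLpNorm A 1 f
  /-- the Hausdorff–Young inequality `‖𝓕 f‖_{c,p'} ≤ C ‖f‖_{A,p}` -/
  hHY : ∀ p p' : ℝ, 1 < p → p ≤ 2 → 1 / p + 1 / p' = 1 →
    ∃ C > (0 : ℝ), ∀ f : ℝ → ℂ, MemW A p f →
      (∫⁻ lam in Set.Ioi (0 : ℝ),
          ENNReal.ofReal (‖FT f lam‖ ^ p' * cden lam)) ^ (1 / p')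
        ≤ ENNReal.ofReal (C * wLpNorm A p f)
  /-- the Hardy–Littlewood inequality of Lemma 1 (with the piecewise weight
  `g(t) = t³` for `t ≤ k`, `g(t) = t^(2(α+1))` for `t > k`) -/
  hHL : ∀ p : ℝ, 1 < p → p ≤ 2 →
    ∃ C > (0 : ℝ), ∀ f : ℝ → ℂ, MemW A p f →
      ∫⁻ x in Set.Ioi (0 : ℝ),
          ENNReal.ofReal ((if x ≤ k then x ^ (3 : ℝ) else x ^ (2 * (α + 1))) ^ (p - 2) *
            ‖FT f x‖ ^ p * cden x)
        ≤ ENNReal.ofReal (C * wLpNorm A p f ^ p)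
  /-- the generalized translation operators -/
  τ : ℝ → (ℝ → ℂ) → ℝ → ℂ
  hτ_contract : ∀ p : ℝ, 1 ≤ p → ∀ (δ : ℝ) (f : ℝ → ℂ), MemW A p f →
    MemW A p (τ δ f) ∧ wLpNorm A p (τ δ f) ≤ wLpNorm A p f
  hτ_diff : ∀ p : ℝ, 1 ≤ p → ∀ (δ : ℝ) (f : ℝ → ℂ), MemW A p f →
    MemW A p (fun y => τ δ f y - f y)
  /-- the translation identity `𝓕(τ_δ f)(λ) = φ_λ(δ) 𝓕(f)(λ)` -/
  hτ_FT : ∀ p : ℝ, 1 ≤ p → p ≤ 2 → ∀ (δ : ℝ) (f : ℝ → ℂ), MemW A p f →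
    ∀ᵐ lam ∂(volume.restrict (Set.Ioi (0 : ℝ))),
      FT (τ δ f) lam = φ lam δ * FT f lam

/-- The modulus of continuity of first order, `ω_{A,p}(f)(δ) = ‖τ_δ f - f‖_{A,p}`. -/
noncomputable def JacobiHypergroup.omega (S : JacobiHypergroup) (p : ℝ)
    (f : ℝ → ℂ) (δ : ℝ) : ℝ :=
  wLpNorm S.A p (fun y => S.τ δ f y - f y)

/-- **Estimate (12)** (from the proof of Theorem 1): for `1 < p ≤ 2` and
`f ∈ L^p_A(ℝ₊)` on the Jacobi hypergroup, with `g(t) = t^(2(α+1))` for `t > k` and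
`g(t) = t³` for `0 ≤ t ≤ k`, there exists `c > 0` such that for every `δ > 0`,
`δ^(2p) ∫₀^{1/δ} t^(2p) |𝓕(f)(t)|^p (g(t))^(p-2) dt/|c(t)|² ≤ c (ω_{A,p}(f)(δ))^p`. -/
theorem estimate_twelve (S : JacobiHypergroup) (p : ℝ) (hp : 1 < p) (hp2 : p ≤ 2)
    (f : ℝ → ℂ) (hf : MemW S.A p f) :
    ∃ c > (0 : ℝ), ∀ δ > (0 : ℝ),
      ENNReal.ofReal (δ ^ (2 * p)) *
          ∫⁻ t in Set.Ioo (0 : ℝ) (1 / δ),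
            ENNReal.ofReal (t ^ (2 * p) * ‖S.FT f t‖ ^ p *
              (if t ≤ S.k then t ^ (3 : ℝ) else t ^ (2 * (S.α + 1))) ^ (p - 2) *
              S.cden t)
        ≤ ENNReal.ofReal (c * S.omega p f δ ^ p) := by
  obtain ⟨C, hC, hHLa⟩ := S.hHL p hp hp2
  have hc0p : (0:ℝ) < S.c₀ ^ p := Real.rpow_pos_of_pos S.hc₀ p
  refine ⟨C * (S.c₀ ^ p)⁻¹, by positivity, ?_⟩
  intro δ hδ
  set h : ℝ → ℂ := fun y => S.τ δ f y - f y with hh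
  have hmem : MemW S.A p h := S.hτ_diff p hp.le δ f hf
  have hHLh := hHLa h hmem
  have hid : ∀ᵐ t ∂(volume.restrict (Set.Ioi (0:ℝ))),
      S.FT h t = (S.φ t δ - 1) * S.FT f t := by
    filter_upwards [S.hτ_FT p hp.le hp2 δ f hf] with t ht
    rw [hh, S.hFT_sub (S.τ δ f) f t, ht]
    ring
  have hidOo : ∀ᵐ t ∂(volume.restrict (Set.Ioo (0:ℝ) (1/δ))),
      S.FT h t = (S.φ t δ - 1) * S.FT f t :=
    ae_restrict_of_ae_restrict_of_subset Set.Ioo_subset_Ioi_self hid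
  have hpt : ∀ᵐ t ∂(volume.restrict (Set.Ioo (0:ℝ) (1/δ))),
      ENNReal.ofReal (δ ^ (2*p)) * ENNReal.ofReal (t ^ (2*p) * ‖S.FT f t‖ ^ p *
        (if t ≤ S.k then t ^ (3:ℝ) else t ^ (2*(S.α+1))) ^ (p-2) * S.cden t)
      ≤ ENNReal.ofReal ((S.c₀ ^ p)⁻¹) *
        ENNReal.ofReal ((if t ≤ S.k then t ^ (3:ℝ) else t ^ (2*(S.α+1))) ^ (p-2) *
          ‖S.FT h t‖ ^ p * S.cden t) := by
    filter_upwards [hidOo, ae_restrict_mem measurableSet_Ioo] with t hidt ht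
    obtain ⟨ht0, ht1⟩ := ht
    set G := (if t ≤ S.k then t ^ (3:ℝ) else t ^ (2*(S.α+1))) with hG
    have hGpos : 0 < G := by
      rw [hG]; split <;> exact Real.rpow_pos_of_pos ht0 _
    have hcden : 0 ≤ S.cden t := by
      rcases le_or_gt t S.k with h1 | h1
      · have h2 := (S.hcden_lo t (by rwa [abs_of_pos ht0])).1
        exact le_trans (mul_nonneg S.hk₁.le (Real.rpow_nonneg (abs_nonneg t) _)) h2
      · have h2 := (S.hcden_hi t (by rwa [abs_of_pos ht0])).1
        exact le_trans (mul_nonneg S.hk₁.le (Real.rpow_nonneg (abs_nonneg t) _)) h2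
    have htδ : t * δ < 1 := (lt_div_iff₀ hδ).mp ht1
    have h1 : S.c₀ * ((t*δ)^2) * ‖S.FT f t‖ ≤ ‖S.FT h t‖ := by
      rw [hidt, norm_mul]
      have hmin : min 1 ((t*δ)^2) = (t*δ)^2 := by
        apply min_eq_right
        nlinarith [mul_nonneg ht0.le hδ.le]
      have hφ := S.hφ_lower t δ hδ
      rw [hmin] at hφ
      have habs : ‖S.φ t δ - 1‖ = ‖1 - S.φ t δ‖ :=
        (norm_sub_rev _ _)
      rw [habs]
      exact mul_le_mul_of_nonneg_right hφ (norm_nonneg _)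
    have hexp : (((t*δ)^2 : ℝ)) ^ p = t ^ (2*p) * δ ^ (2*p) := by
      rw [← Real.rpow_natCast (t*δ) 2, ← Real.rpow_mul (mul_nonneg ht0.le hδ.le)]
      push_cast
      rw [Real.mul_rpow ht0.le hδ.le]
    have hkey : S.c₀ ^ p * (δ ^ (2*p) * (t ^ (2*p) * ‖S.FT f t‖ ^ p))
        ≤ ‖S.FT h t‖ ^ p := by
      have h2 := Real.rpow_le_rpow (mul_nonneg (mul_nonneg S.hc₀.le (by positivity)) (norm_nonneg _)) h1 (by linarith : (0:ℝ) ≤ p)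
      calc S.c₀ ^ p * (δ ^ (2*p) * (t ^ (2*p) * ‖S.FT f t‖ ^ p))
          = (S.c₀ * (t*δ)^2 * ‖S.FT f t‖) ^ p := by
            rw [Real.mul_rpow (mul_nonneg S.hc₀.le (by positivity)) (norm_nonneg _),
                Real.mul_rpow S.hc₀.le (by positivity), hexp]
            ring
        _ ≤ ‖S.FT h t‖ ^ p := h2
    rw [← ENNReal.ofReal_mul (by positivity),
        ← ENNReal.ofReal_mul (by positivity : (0:ℝ) ≤ (S.c₀ ^ p)⁻¹)]
    apply ENNReal.ofReal_le_ofReal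
    have hGc : 0 ≤ G ^ (p-2) * S.cden t :=
      mul_nonneg (Real.rpow_nonneg hGpos.le _) hcden
    calc δ ^ (2*p) * (t ^ (2*p) * ‖S.FT f t‖ ^ p * G ^ (p-2) * S.cden t)
        = (S.c₀ ^ p)⁻¹ * ((S.c₀ ^ p * (δ ^ (2*p) * (t ^ (2*p) * ‖S.FT f t‖ ^ p)))
            * (G ^ (p-2) * S.cden t)) := by
          field_simp
      _ ≤ (S.c₀ ^ p)⁻¹ * (‖S.FT h t‖ ^ p * (G ^ (p-2) * S.cden t)) :=
          mul_le_mul_of_nonneg_left (mul_le_mul_of_nonneg_right hkey hGc)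
            (by positivity)
      _ = (S.c₀ ^ p)⁻¹ * (G ^ (p-2) * ‖S.FT h t‖ ^ p * S.cden t) := by ring
  calc ENNReal.ofReal (δ ^ (2*p)) *
        ∫⁻ t in Set.Ioo (0:ℝ) (1/δ),
          ENNReal.ofReal (t ^ (2*p) * ‖S.FT f t‖ ^ p *
            (if t ≤ S.k then t ^ (3:ℝ) else t ^ (2*(S.α+1))) ^ (p-2) * S.cden t)
      = ∫⁻ t in Set.Ioo (0:ℝ) (1/δ),
          ENNReal.ofReal (δ ^ (2*p)) * ENNReal.ofReal (t ^ (2*p) * ‖S.FT f t‖ ^ p *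
            (if t ≤ S.k then t ^ (3:ℝ) else t ^ (2*(S.α+1))) ^ (p-2) * S.cden t) :=
        (lintegral_const_mul' _ _ ENNReal.ofReal_ne_top).symm
    _ ≤ ∫⁻ t in Set.Ioo (0:ℝ) (1/δ),
          ENNReal.ofReal ((S.c₀ ^ p)⁻¹) *
          ENNReal.ofReal ((if t ≤ S.k then t ^ (3:ℝ) else t ^ (2*(S.α+1))) ^ (p-2) *
            ‖S.FT h t‖ ^ p * S.cden t) := lintegral_mono_ae hpt
    _ = ENNReal.ofReal ((S.c₀ ^ p)⁻¹) *
        ∫⁻ t in Set.Ioo (0:ℝ) (1/δ),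
          ENNReal.ofReal ((if t ≤ S.k then t ^ (3:ℝ) else t ^ (2*(S.α+1))) ^ (p-2) *
            ‖S.FT h t‖ ^ p * S.cden t) :=
        lintegral_const_mul' _ _ ENNReal.ofReal_ne_top
    _ ≤ ENNReal.ofReal ((S.c₀ ^ p)⁻¹) *
        ∫⁻ t in Set.Ioi (0:ℝ),
          ENNReal.ofReal ((if t ≤ S.k then t ^ (3:ℝ) else t ^ (2*(S.α+1))) ^ (p-2) *
            ‖S.FT h t‖ ^ p * S.cden t) :=
        mul_le_mul_right (lintegral_mono_set Set.Ioo_subset_Ioi_self) _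
    _ ≤ ENNReal.ofReal ((S.c₀ ^ p)⁻¹) * ENNReal.ofReal (C * wLpNorm S.A p h ^ p) :=
        mul_le_mul_right hHLh _
    _ ≤ ENNReal.ofReal (C * (S.c₀ ^ p)⁻¹ * S.omega p f δ ^ p) := by
        rw [← ENNReal.ofReal_mul (by positivity : (0:ℝ) ≤ (S.c₀ ^ p)⁻¹)]
        apply ENNReal.ofReal_le_ofReal
        have homega : S.omega p f δ = wLpNorm S.A p h := rfl
        rw [homega]
        apply le_of_eq
        ring
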